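/- Let k be a field, m ≥ n ≥ 1, and 0 ≤ r ≤ n−1. Then ε_r⁻¹·P_{mn−1,1}(k)·ε_r ∩ T_{m,n}(k) = t_Δ(P^m_{r+1}, P^n_{r+1})(k); that is, for h ∈ GL_m(k) and g ∈ GL_n(k), one has ε_r·t(h,g)·ε_r⁻¹ ∈ P_{mn−1,1}(k) if and only if t(h,g) ∈ t_Δ(P^m_{r+1}, P^n_{r+1})(k). -/

import Mathlib

open Matrix

/-- Kronecker product of square matrices, realized on `Fin (m * n)`:
the `(i,j)` block of size `n` is `h i j • g`. -/
def kron {k : Type*} [Field k] {m n : ℕ} (h : Matrix (Fin m) (Fin m) k)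
    (g : Matrix (Fin n) (Fin n) k) : Matrix (Fin (m * n)) (Fin (m * n)) k :=
  Matrix.of fun x y => h x.divNat y.divNat * g x.modNat y.modNat

/-- `T_{m,n}(k)`: the image of the Kronecker product map on invertible matrices. -/
def TSet (k : Type*) [Field k] (m n : ℕ) : Set (Matrix (Fin (m * n)) (Fin (m * n)) k) :=
  {A | ∃ (h : Matrix (Fin m) (Fin m) k) (g : Matrix (Fin n) (Fin n) k),
    IsUnit h.det ∧ IsUnit g.det ∧ A = kron h g}

/-- `P_{N-1,1}(k)`: invertible `N × N` matrices whose last row is `(0,…,0,d)`, `d ≠ 0`. -/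
def ParabP (k : Type*) [Field k] (N : ℕ) : Set (Matrix (Fin N) (Fin N) k) :=
  {A | IsUnit A.det ∧ ∀ i j : Fin N, (i : ℕ) = N - 1 → (j : ℕ) ≠ N - 1 → A i j = 0}

/-- The permutation matrix `w_j` (with `1 ≤ j ≤ N`), given in block form by rows
`((I_{j−1},0,0),(0,0,I_{N−j}),(0,1,0))`, the middle column block having width 1. -/
def wMat (k : Type*) [Field k] (N j : ℕ) : Matrix (Fin N) (Fin N) k :=
  Matrix.of fun i l =>
    if (l : ℕ) = (if (i : ℕ) + 1 < j then (i : ℕ)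
                  else if (i : ℕ) + 1 < N then (i : ℕ) + 1 else j - 1)
    then 1 else 0

/-- The unipotent matrix `u_j(v)` (with `1 ≤ j ≤ N`, `v` a row vector of length `N - j`):
the identity except that its `j`-th row is `(0,…,0,1,v)` with the `1` in position `j`. -/
def uMat (k : Type*) [Field k] (N j : ℕ) (v : Fin (N - j) → k) : Matrix (Fin N) (Fin N) k :=
  Matrix.of fun i l =>
    if (i : ℕ) = j - 1 then
      (if (l : ℕ) = j - 1 then 1
       else if h : j ≤ (l : ℕ) then v ⟨(l : ℕ) - j, by have := l.isLt; omega⟩ else 0)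
    else if l = i then 1 else 0

/-- The row vector `b_r ∈ k^{rn}` given by concatenating the standard basis row vectors
`e_{n-1}, e_{n-2}, …, e_{n-r}` of `k^n`: its block `p` (0-based) is `e_{n-1-p}`. -/
def bVec (k : Type*) [Field k] (n : ℕ) {M : ℕ} : Fin M → k :=
  fun i => if (i : ℕ) % n + (i : ℕ) / n + 2 = n then 1 else 0

/-- The representative `ε_r := w_{(m−r)n} · u_{(m−r)n}(b_r) ∈ GL_{mn}(k)`. -/
def epsMat (k : Type*) [Field k] (m n r : ℕ) : Matrix (Fin (m * n)) (Fin (m * n)) k :=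
  wMat k (m * n) ((m - r) * n) * uMat k (m * n) ((m - r) * n) (bVec k n)

/-- The double coset `P_{mn−1,1}(k) · A · T_{m,n}(k)`. -/
def dCoset (k : Type*) [Field k] (m n : ℕ) (A : Matrix (Fin (m * n)) (Fin (m * n)) k) :
    Set (Matrix (Fin (m * n)) (Fin (m * n)) k) :=
  {X | ∃ p ∈ ParabP k (m * n), ∃ t ∈ TSet k m n, X = p * A * t}

/-- The antidiagonal permutation matrix `w̃` (1's on the antidiagonal). -/
def antidiag (k : Type*) [Field k] (N : ℕ) : Matrix (Fin N) (Fin N) k :=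
  Matrix.of fun i j => if (i : ℕ) + (j : ℕ) + 1 = N then 1 else 0

/-- `t_Δ(P^m_{r+1}, P^n_{r+1})(k)`: Kronecker products `t(h,g)` where
`h = ((A,B),(0,λ·d*)) ∈ GL_m(k)`, `g = ((a,b),(0,d)) ∈ GL_n(k)` with `d ∈ GL_{r+1}(k)`,
`λ ∈ k^×`, and `d* = w̃⁻¹·(dᵀ)⁻¹·w̃`. -/
def tDelta (k : Type*) [Field k] (m n r : ℕ) :
    Set (Matrix (Fin (m * n)) (Fin (m * n)) k) :=
  {X | ∃ (h : Matrix (Fin m) (Fin m) k) (g : Matrix (Fin n) (Fin n) k)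
        (d : Matrix (Fin (r + 1)) (Fin (r + 1)) k) (lam : kˣ),
      X = kron h g ∧ IsUnit h.det ∧ IsUnit g.det ∧ IsUnit d.det ∧
      (∀ i j : Fin m, m - (r + 1) ≤ (i : ℕ) → (j : ℕ) < m - (r + 1) → h i j = 0) ∧
      (∀ i j : Fin n, n - (r + 1) ≤ (i : ℕ) → (j : ℕ) < n - (r + 1) → g i j = 0) ∧
      (∀ (i j : Fin m) (i' j' : Fin (r + 1)),
        (i : ℕ) = m - (r + 1) + (i' : ℕ) → (j : ℕ) = m - (r + 1) + (j' : ℕ) →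
        h i j = (lam : k) *
          ((antidiag k (r + 1))⁻¹ * (d.transpose)⁻¹ * antidiag k (r + 1)) i' j') ∧
      (∀ (i j : Fin n) (i' j' : Fin (r + 1)),
        (i : ℕ) = n - (r + 1) + (i' : ℕ) → (j : ℕ) = n - (r + 1) + (j' : ℕ) →
        g i j = d i' j')}


namespace St10

variable {k : Type*} [Field k]

/-! ### The permutation matrix `wMat` -/

/-- The permutation underlying `wMat`. -/
def piF (N j i : ℕ) : ℕ :=
  if i + 1 < j then i else if i + 1 < N then i + 1 else j - 1

lemma wMat_apply (N j : ℕ) (a l : Fin N) :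
    wMat k N j a l = if (l : ℕ) = piF N j a then 1 else 0 := rfl

lemma piF_lt {N j i : ℕ} (hi : i < N) (hj : 1 ≤ j) (hjN : j ≤ N) : piF N j i < N := by
  unfold piF; split_ifs <;> omega

lemma piF_inj {N j a b : ℕ} (ha : a < N) (hb : b < N) (hj : 1 ≤ j) (hjN : j ≤ N)
    (h : piF N j a = piF N j b) : a = b := by
  unfold piF at h; split_ifs at h <;> omega

lemma wMul (N j : ℕ) (hj : 1 ≤ j) (hjN : j ≤ N) :
    wMat k N j * (wMat k N j)ᵀ = 1 := by
  ext a b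
  rw [Matrix.mul_apply, Finset.sum_eq_single (⟨piF N j a, piF_lt a.isLt hj hjN⟩ : Fin N)]
  · by_cases hab : a = b
    · subst hab
      simp [wMat_apply, Matrix.one_apply, Matrix.transpose_apply]
    · have h2 : piF N j (a : ℕ) ≠ piF N j (b : ℕ) := by
        intro hEq; exact hab (Fin.ext (piF_inj a.isLt b.isLt hj hjN hEq))
      simp [wMat_apply, Matrix.one_apply, Matrix.transpose_apply, hab, h2]
  · intro c _ hc
    have : (c : ℕ) ≠ piF N j (a : ℕ) := fun h => hc (Fin.ext h)
    simp [wMat_apply, Matrix.transpose_apply, this]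
  · intro h; exact absurd (Finset.mem_univ _) h

/-! ### The unipotent matrix `uMat` -/

/-- The strictly-upper part of `uMat`. -/
def eAux (k : Type*) [Field k] (N j : ℕ) (v : Fin (N - j) → k) : Matrix (Fin N) (Fin N) k :=
  Matrix.of fun i l =>
    if (i : ℕ) = j - 1 then
      (if h : j ≤ (l : ℕ) then v ⟨(l : ℕ) - j, by have := l.isLt; omega⟩ else 0)
    else 0

lemma uMat_eq (N j : ℕ) (hj : 1 ≤ j) (v : Fin (N - j) → k) :
    uMat k N j v = 1 + eAux k N j v := by
  ext i l
  simp only [uMat, eAux, Matrix.of_apply, Matrix.add_apply, Matrix.one_apply]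
  by_cases hi : (i : ℕ) = j - 1
  · rw [if_pos hi, if_pos hi]
    by_cases hl : (l : ℕ) = j - 1
    · have hli : i = l := Fin.ext (by omega)
      rw [if_pos hl, if_pos hli, dif_neg (by omega), add_zero]
    · have hli : i ≠ l := fun h => hl (by rw [← h]; exact hi)
      rw [if_neg hl, if_neg hli, zero_add]
  · rw [if_neg hi, if_neg hi, add_zero]
    simp [eq_comm]

lemma eAux_mul (N j : ℕ) (hj : 1 ≤ j) (v w : Fin (N - j) → k) :
    eAux k N j v * eAux k N j w = 0 := by
  ext i l
  rw [Matrix.mul_apply]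
  rw [Matrix.zero_apply]
  apply Finset.sum_eq_zero
  intro t _
  by_cases ht : (t : ℕ) = j - 1
  · have h1 : ¬ j ≤ (t : ℕ) := by omega
    have hz : eAux k N j v i t = 0 := by
      simp only [eAux, Matrix.of_apply, dif_neg h1]
      split_ifs <;> rfl
    rw [hz, zero_mul]
  · have hz : eAux k N j w t l = 0 := by simp [eAux, ht]
    rw [hz, mul_zero]

lemma eAux_add (N j : ℕ) (v w : Fin (N - j) → k) :
    eAux k N j (v + w) = eAux k N j v + eAux k N j w := by
  ext i l
  simp only [eAux, Matrix.of_apply, Matrix.add_apply]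
  split_ifs <;> simp

lemma eAux_zero (N j : ℕ) : eAux k N j (0 : Fin (N - j) → k) = 0 := by
  ext i l
  simp only [eAux, Matrix.of_apply, Matrix.zero_apply]
  split_ifs <;> simp

lemma uMul (N j : ℕ) (hj : 1 ≤ j) (v w : Fin (N - j) → k) :
    uMat k N j v * uMat k N j w = uMat k N j (v + w) := by
  rw [uMat_eq N j hj v, uMat_eq N j hj w, uMat_eq N j hj (v + w), eAux_add]
  rw [add_mul, mul_add, mul_add, one_mul, one_mul, mul_one, eAux_mul N j hj]
  abel

lemma uOne (N j : ℕ) (hj : 1 ≤ j) : uMat k N j (0 : Fin (N - j) → k) = 1 := by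
  rw [uMat_eq N j hj, eAux_zero, add_zero]

lemma uInv (N j : ℕ) (hj : 1 ≤ j) (v : Fin (N - j) → k) :
    uMat k N j v * uMat k N j (-v) = 1 := by
  rw [uMul N j hj, add_neg_cancel, uOne N j hj]

end St10

namespace St10

variable {k : Type*} [Field k]

/-- The last row of `epsMat`. -/
def Lvec (k : Type*) [Field k] (m n r : ℕ) : Fin (m * n) → k :=
  fun y => if (y : ℕ) % n + (y : ℕ) / n + 2 = m + n - r then 1 else 0

lemma arith_main {m n r : ℕ} (hn : 1 ≤ n) (hnm : n ≤ m) (hrn : r + 1 ≤ n) {y : ℕ}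
    (hy : y < m * n) :
    ((y = (m - r) * n - 1) ∨
      ((m - r) * n ≤ y ∧ (y - (m - r) * n) % n + (y - (m - r) * n) / n + 2 = n))
      ↔ y % n + y / n + 2 = m + n - r := by
  have hn0 : 0 < n := hn
  have hP1 : 0 < (m - r) * n := Nat.mul_pos (by omega) hn0
  have hsn : y % n < n := Nat.mod_lt _ hn0
  have hq : y / n < m := Nat.div_lt_of_lt_mul (by rwa [mul_comm] at hy)
  by_cases hge : (m - r) * n ≤ y
  · have hge' : m - r ≤ y / n := (Nat.le_div_iff_mul_le hn0).mpr hge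
    have hmod : (y - (m - r) * n) % n = y % n := by
      rw [mul_comm]; exact Nat.sub_mul_mod (by rwa [mul_comm] at hge)
    have hdiv : (y - (m - r) * n) / n = y / n - (m - r) := by
      rw [mul_comm]; exact Nat.sub_mul_div _ _ _
    rw [hmod, hdiv]
    omega
  · have hq' : y / n < m - r := (Nat.div_lt_iff_lt_mul hn0).mpr (by omega)
    have e1 : (m - r) * n = n * (m - r - 1) + n := by
      obtain ⟨t, ht⟩ := Nat.exists_eq_add_of_le (show 1 ≤ m - r by omega)
      rw [ht]
      have h2 : 1 + t - 1 = t := by omega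
      rw [h2]; ring
    have hbig : y = (m - r) * n - 1 ↔ (y / n = m - r - 1 ∧ y % n = n - 1) := by
      constructor
      · intro hyy
        have hy2 : y = n * (m - r - 1) + (n - 1) := by omega
        constructor
        · rw [hy2, Nat.mul_add_div hn0, Nat.div_eq_of_lt (by omega), add_zero]
        · rw [hy2, Nat.mul_add_mod]
          exact Nat.mod_eq_of_lt (by omega)
      · rintro ⟨h1, h2⟩
        have hdm := Nat.div_add_mod y n
        rw [h1, h2] at hdm
        omega
    omega

lemma eps_apply_last (m n r : ℕ) (hn : 1 ≤ n) (hnm : n ≤ m) (hrn : r + 1 ≤ n)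
    (i : Fin (m * n)) (hi : (i : ℕ) = m * n - 1) (y : Fin (m * n)) :
    epsMat k m n r i y = Lvec k m n r y := by
  have hN : 0 < m * n := Nat.mul_pos (by omega) (by omega)
  have hj1 : 0 < (m - r) * n := Nat.mul_pos (by omega) (by omega)
  have hjN : (m - r) * n ≤ m * n := Nat.mul_le_mul_right _ (by omega)
  have hpi : piF (m * n) ((m - r) * n) (i : ℕ) = (m - r) * n - 1 := by
    unfold piF; split_ifs <;> omega
  simp only [epsMat, Matrix.mul_apply]
  rw [Finset.sum_eq_single (⟨(m - r) * n - 1, by omega⟩ : Fin (m * n))]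
  · rw [wMat_apply, hpi, if_pos rfl, one_mul]
    have key := arith_main (m := m) (n := n) (r := r) hn hnm hrn y.isLt
    show (if ((⟨(m - r) * n - 1, _⟩ : Fin (m * n)) : ℕ) = (m - r) * n - 1 then _ else _) = _
    rw [if_pos rfl]
    by_cases h1 : (y : ℕ) = (m - r) * n - 1
    · rw [if_pos h1]
      unfold Lvec
      rw [if_pos (key.mp (Or.inl h1))]
    · rw [if_neg h1]
      by_cases h2 : (m - r) * n ≤ (y : ℕ)
      · rw [dif_pos h2]
        show (if ((y : ℕ) - (m - r) * n) % n + ((y : ℕ) - (m - r) * n) / n + 2 = n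
            then (1 : k) else 0) = _
        unfold Lvec
        by_cases h3 : ((y : ℕ) - (m - r) * n) % n + ((y : ℕ) - (m - r) * n) / n + 2 = n
        · rw [if_pos h3, if_pos (key.mp (Or.inr ⟨h2, h3⟩))]
        · rw [if_neg h3, if_neg (fun hc => by
            rcases key.mpr hc with hL | ⟨_, hB⟩
            · exact h1 hL
            · exact h3 hB)]
      · rw [dif_neg h2]
        unfold Lvec
        rw [if_neg (fun hc => by
          rcases key.mpr hc with hL | ⟨hA, _⟩
          · exact h1 hL
          · exact h2 hA)]
  · intro c _ hc
    have hne : (c : ℕ) ≠ piF (m * n) ((m - r) * n) (i : ℕ) := by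
      rw [hpi]; exact fun h => hc (Fin.ext h)
    rw [wMat_apply, if_neg hne, zero_mul]
  · intro h; exact absurd (Finset.mem_univ _) h

end St10

namespace St10

variable {k : Type*} [Field k]

/-- Local replacement for `Finset.sum_of_injective`. -/
lemma sum_of_injective {ι κ M : Type*} [Fintype ι] [Fintype κ] [AddCommMonoid M]
    (e : ι → κ) (he : Function.Injective e) (f : ι → M) (g : κ → M)
    (h' : ∀ i ∉ Set.range e, g i = 0) (h : ∀ i, f i = g (e i)) :
    ∑ i, f i = ∑ j, g j :=
  Finset.sum_of_injOn e he.injOn (by simp) (by simpa using h') (fun i _ => h i)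

section Emb

variable {m n r : ℕ}

/-- Row indices (in `Fin m`) of the support of `Lvec`. -/
def HiF (hrm : r + 1 ≤ m) (s : Fin (r + 1)) : Fin m :=
  ⟨m - r - 1 + s, by have := s.isLt; omega⟩

/-- Column indices (in `Fin n`) of the support of `Lvec`. -/
def GiF (hrn : r + 1 ≤ n) (s : Fin (r + 1)) : Fin n :=
  ⟨n - 1 - s, by have := s.isLt; omega⟩

lemma HiF_inj (hrm : r + 1 ≤ m) : Function.Injective (HiF hrm) := by
  intro s t h
  have hs := s.isLt; have ht := t.isLt
  have := congrArg Fin.val h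
  simp only [HiF] at this
  exact Fin.ext (by omega)

lemma GiF_inj (hrn : r + 1 ≤ n) : Function.Injective (GiF hrn) := by
  intro s t h
  have hs := s.isLt; have ht := t.isLt
  have := congrArg Fin.val h
  simp only [GiF] at this
  exact Fin.ext (by omega)

/-- The support of `Lvec` inside `Fin (m * n)`. -/
def embF (hn : 1 ≤ n) (hnm : n ≤ m) (hrn : r + 1 ≤ n) (s : Fin (r + 1)) : Fin (m * n) :=
  ⟨n * (m - r - 1 + s) + (n - 1 - s), by
    have hs := s.isLt
    have h2 : n * (m - r - 1 + (s : ℕ)) ≤ n * (m - 1) := Nat.mul_le_mul_left _ (by omega)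
    have h3 : n * (m - 1) + n = n * m := by
      obtain ⟨t, ht⟩ := Nat.exists_eq_add_of_le (show 1 ≤ m by omega)
      rw [ht]
      have h4 : 1 + t - 1 = t := by omega
      rw [h4]; ring
    have h5 : m * n = n * m := mul_comm m n
    omega⟩

lemma embF_val_div (hn : 1 ≤ n) (hnm : n ≤ m) (hrn : r + 1 ≤ n) (s : Fin (r + 1)) :
    ((embF hn hnm hrn s : Fin (m * n)) : ℕ) / n = m - r - 1 + s := by
  have hs := s.isLt
  show (n * (m - r - 1 + (s : ℕ)) + (n - 1 - s)) / n = _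
  rw [Nat.mul_add_div (by omega), Nat.div_eq_of_lt (by omega), add_zero]

lemma embF_val_mod (hn : 1 ≤ n) (hnm : n ≤ m) (hrn : r + 1 ≤ n) (s : Fin (r + 1)) :
    ((embF hn hnm hrn s : Fin (m * n)) : ℕ) % n = n - 1 - s := by
  have hs := s.isLt
  show (n * (m - r - 1 + (s : ℕ)) + (n - 1 - s)) % n = _
  rw [Nat.mul_add_mod]
  exact Nat.mod_eq_of_lt (by omega)

lemma embF_divNat (hn : 1 ≤ n) (hnm : n ≤ m) (hrn : r + 1 ≤ n) (s : Fin (r + 1)) :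
    (embF hn hnm hrn s : Fin (m * n)).divNat = HiF (le_trans hrn hnm) s :=
  Fin.ext (embF_val_div hn hnm hrn s)

lemma embF_modNat (hn : 1 ≤ n) (hnm : n ≤ m) (hrn : r + 1 ≤ n) (s : Fin (r + 1)) :
    (embF hn hnm hrn s : Fin (m * n)).modNat = GiF hrn s :=
  Fin.ext (embF_val_mod hn hnm hrn s)

lemma embF_inj (hn : 1 ≤ n) (hnm : n ≤ m) (hrn : r + 1 ≤ n) :
    Function.Injective (embF (m := m) hn hnm hrn) := by
  intro s t h
  have := congrArg (fun z : Fin (m * n) => (z : ℕ) / n) h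
  simp only [embF_val_div hn hnm hrn] at this
  have hs := s.isLt; have ht := t.isLt
  exact Fin.ext (by omega)

lemma Lvec_embF (hn : 1 ≤ n) (hnm : n ≤ m) (hrn : r + 1 ≤ n) (s : Fin (r + 1)) :
    Lvec k m n r (embF hn hnm hrn s) = 1 := by
  have hs := s.isLt
  unfold Lvec
  rw [embF_val_div hn hnm hrn, embF_val_mod hn hnm hrn, if_pos (by omega)]

lemma Lvec_support (hn : 1 ≤ n) (hnm : n ≤ m) (hrn : r + 1 ≤ n) {x : Fin (m * n)}
    (hx : Lvec k m n r x ≠ 0) : ∃ s : Fin (r + 1), x = embF hn hnm hrn s := by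
  have hc : (x : ℕ) % n + (x : ℕ) / n + 2 = m + n - r := by
    by_contra hc
    unfold Lvec at hx
    rw [if_neg hc] at hx
    exact hx rfl
  have hxlt := x.isLt
  have hmod : (x : ℕ) % n < n := Nat.mod_lt _ (by omega)
  have hdm := Nat.div_add_mod (x : ℕ) n
  have hqlt : (x : ℕ) / n < m := Nat.div_lt_of_lt_mul
    (by have h5 : m * n = n * m := mul_comm m n; omega)
  refine ⟨⟨(x : ℕ) / n - (m - r - 1), by omega⟩, Fin.ext ?_⟩
  show (x : ℕ) = n * (m - r - 1 + ((x : ℕ) / n - (m - r - 1)))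
      + (n - 1 - ((x : ℕ) / n - (m - r - 1)))
  have e1 : m - r - 1 + ((x : ℕ) / n - (m - r - 1)) = (x : ℕ) / n := by omega
  rw [e1]
  omega

/-- Sum of any function against the support of `Lvec`. -/
lemma sum_Lvec_mul (hn : 1 ≤ n) (hnm : n ≤ m) (hrn : r + 1 ≤ n) (f : Fin (m * n) → k) :
    ∑ x, Lvec k m n r x * f x = ∑ s : Fin (r + 1), f (embF hn hnm hrn s) := by
  refine (sum_of_injective (embF hn hnm hrn) (embF_inj hn hnm hrn)
    _ _ (fun x hx => ?_) (fun s => ?_)).symm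
  · have : Lvec k m n r x = 0 := by
      by_contra h0
      obtain ⟨s, rfl⟩ := Lvec_support hn hnm hrn h0
      exact hx (Set.mem_range_self s)
    rw [this, zero_mul]
  · rw [Lvec_embF hn hnm hrn, one_mul]

/-- The row `Lvec ᵥ* kron h g`. -/
lemma row_kron (hn : 1 ≤ n) (hnm : n ≤ m) (hrn : r + 1 ≤ n)
    (h : Matrix (Fin m) (Fin m) k) (g : Matrix (Fin n) (Fin n) k) (y : Fin (m * n)) :
    (Lvec k m n r ᵥ* kron h g) y =
      ∑ s : Fin (r + 1), h (HiF (le_trans hrn hnm) s) y.divNat * g (GiF hrn s) y.modNat := by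
  show ∑ x, Lvec k m n r x * kron h g x y = _
  rw [sum_Lvec_mul hn hnm hrn]
  refine Finset.sum_congr rfl (fun s _ => ?_)
  show h (embF hn hnm hrn s).divNat y.divNat * g (embF hn hnm hrn s).modNat y.modNat = _
  rw [embF_divNat, embF_modNat]

/-- The pairing `Fin m → Fin n → Fin (m * n)`. -/
def pairF (hn : 1 ≤ n) (a : Fin m) (b : Fin n) : Fin (m * n) :=
  ⟨n * a + b, by
    have ha := a.isLt; have hb := b.isLt
    have h2 : n * (a : ℕ) ≤ n * (m - 1) := Nat.mul_le_mul_left _ (by omega)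
    have h3 : n * (m - 1) + n = n * m := by
      obtain ⟨t, ht⟩ := Nat.exists_eq_add_of_le (show 1 ≤ m by omega)
      rw [ht]
      have h4 : 1 + t - 1 = t := by omega
      rw [h4]; ring
    have h5 : m * n = n * m := mul_comm m n
    omega⟩

lemma pairF_val_div (hn : 1 ≤ n) (a : Fin m) (b : Fin n) :
    ((pairF hn a b : Fin (m * n)) : ℕ) / n = a := by
  show (n * (a : ℕ) + b) / n = _
  rw [Nat.mul_add_div (by omega), Nat.div_eq_of_lt b.isLt, add_zero]

lemma pairF_val_mod (hn : 1 ≤ n) (a : Fin m) (b : Fin n) :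
    ((pairF hn a b : Fin (m * n)) : ℕ) % n = b := by
  show (n * (a : ℕ) + b) % n = _
  rw [Nat.mul_add_mod]
  exact Nat.mod_eq_of_lt b.isLt

lemma pairF_divNat (hn : 1 ≤ n) (a : Fin m) (b : Fin n) :
    (pairF hn a b : Fin (m * n)).divNat = a := Fin.ext (pairF_val_div hn a b)

lemma pairF_modNat (hn : 1 ≤ n) (a : Fin m) (b : Fin n) :
    (pairF hn a b : Fin (m * n)).modNat = b := Fin.ext (pairF_val_mod hn a b)

end Emb

end St10

namespace St10

variable {k : Type*} [Field k] {r : ℕ}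

/-- Reversal of `Fin (r+1)`. -/
def revF (r : ℕ) (i : Fin (r + 1)) : Fin (r + 1) := ⟨r - i, by have := i.isLt; omega⟩

lemma antidiag_apply (i j : Fin (r + 1)) :
    antidiag k (r + 1) i j = if (i : ℕ) + (j : ℕ) + 1 = r + 1 then 1 else 0 := rfl

lemma antidiag_mul_apply (M : Matrix (Fin (r + 1)) (Fin (r + 1)) k) (i j : Fin (r + 1)) :
    (antidiag k (r + 1) * M) i j = M (revF r i) j := by
  have hi := i.isLt
  rw [Matrix.mul_apply, Finset.sum_eq_single (revF r i)]
  · rw [antidiag_apply, if_pos (show (i : ℕ) + ((revF r i : Fin (r + 1)) : ℕ) + 1 = r + 1 by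
      show (i : ℕ) + (r - (i : ℕ)) + 1 = r + 1; omega), one_mul]
  · intro c _ hc
    have hcv := c.isLt
    rw [antidiag_apply, if_neg, zero_mul]
    intro hcc
    exact hc (Fin.ext (show (c : ℕ) = r - (i : ℕ) by omega))
  · intro hmem; exact absurd (Finset.mem_univ _) hmem

lemma antidiag_transpose : (antidiag k (r + 1))ᵀ = antidiag k (r + 1) := by
  ext i j
  show antidiag k (r + 1) j i = antidiag k (r + 1) i j
  rw [antidiag_apply, antidiag_apply]
  exact if_congr ⟨fun h => by omega, fun h => by omega⟩ rfl rfl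

lemma antidiag_mul_self : antidiag k (r + 1) * antidiag k (r + 1) = 1 := by
  ext i j
  have hi := i.isLt; have hj := j.isLt
  rw [antidiag_mul_apply, antidiag_apply, Matrix.one_apply]
  have hrev : ((revF r i : Fin (r + 1)) : ℕ) = r - (i : ℕ) := rfl
  by_cases h : i = j
  · subst h
    rw [if_pos (by rw [hrev]; omega), if_pos rfl]
  · rw [if_neg, if_neg h]
    rw [hrev]
    intro hc
    exact h (Fin.ext (show (i : ℕ) = (j : ℕ) by omega))

lemma antidiag_inv : (antidiag k (r + 1))⁻¹ = antidiag k (r + 1) :=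
  Matrix.inv_eq_right_inv antidiag_mul_self

end St10

namespace St10

variable {k : Type*} [Field k]

/-- If a linear combination of distinct rows of an invertible matrix vanishes, the
coefficients vanish. -/
lemma key_cancel {p : ℕ} {ι : Type*} [Fintype ι] [DecidableEq ι]
    (A : Matrix ι ι k) (hA : IsUnit A.det) (e : Fin p → ι) (he : Function.Injective e)
    (coef : Fin p → k) (hsum : ∀ a, ∑ s, coef s * A (e s) a = 0) : ∀ s, coef s = 0 := by
  set W : ι → k := fun t => ∑ s, if t = e s then coef s else 0 with hW
  have hWe : ∀ s, W (e s) = coef s := by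
    intro s
    rw [hW]
    show (∑ c, if e s = e c then coef c else 0) = coef s
    rw [Finset.sum_eq_single s]
    · rw [if_pos rfl]
    · intro c _ hc
      exact if_neg (fun h => hc (he h).symm)
    · intro hm; exact absurd (Finset.mem_univ _) hm
  have hW0 : W ᵥ* A = 0 := by
    funext a
    show (∑ t, W t * A t a) = 0
    calc ∑ t, W t * A t a
        = ∑ t, ∑ s, (if t = e s then coef s else 0) * A t a := by
          refine Finset.sum_congr rfl fun t _ => ?_
          rw [hW, Finset.sum_mul]
      _ = ∑ s, ∑ t, (if t = e s then coef s else 0) * A t a := Finset.sum_comm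
      _ = ∑ s, coef s * A (e s) a := by
          refine Finset.sum_congr rfl fun s _ => ?_
          simp only [ite_mul, zero_mul]
          rw [Finset.sum_ite_eq' Finset.univ (e s) (fun t => coef s * A t a)]
          rw [if_pos (Finset.mem_univ _)]
      _ = 0 := hsum a
  have hWzero : W = 0 := by
    calc W = W ᵥ* 1 := (Matrix.vecMul_one W).symm
      _ = W ᵥ* (A * A⁻¹) := by rw [Matrix.mul_nonsing_inv A hA]
      _ = (W ᵥ* A) ᵥ* A⁻¹ := (Matrix.vecMul_vecMul W A A⁻¹).symm
      _ = (0 : ι → k) ᵥ* A⁻¹ := by rw [hW0]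
      _ = 0 := Matrix.zero_vecMul _
  intro s
  rw [← hWe s, hWzero]
  rfl

section Struct

variable {m n r : ℕ}

/-- Bottom-right block indices, in increasing order. -/
def GiD (hrn : r + 1 ≤ n) (i' : Fin (r + 1)) : Fin n :=
  ⟨n - r - 1 + i', by have := i'.isLt; omega⟩

lemma GiF_eq_GiD (hrn : r + 1 ≤ n) (s : Fin (r + 1)) :
    GiF hrn s = GiD hrn (revF r s) := by
  have := s.isLt
  exact Fin.ext (show n - 1 - (s : ℕ) = n - r - 1 + (r - (s : ℕ)) by omega)

/-- If the bottom-left block of an invertible matrix vanishes, the bottom-right block is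
invertible. -/
lemma det_block (hrn : r + 1 ≤ n) (g : Matrix (Fin n) (Fin n) k) (hg : IsUnit g.det)
    (hz : ∀ i b : Fin n, n - r - 1 ≤ (i : ℕ) → (b : ℕ) < n - r - 1 → g i b = 0) :
    IsUnit (Matrix.of fun i' j' : Fin (r + 1) => g (GiD hrn i') (GiD hrn j')).det := by
  have hsum : (n - r - 1) + (r + 1) = n := by omega
  set e : Fin (n - r - 1) ⊕ Fin (r + 1) ≃ Fin n := finSumFinEquiv.trans (finCongr hsum)
    with he
  have hval_l : ∀ i : Fin (n - r - 1), ((e (Sum.inl i)) : ℕ) = (i : ℕ) := fun i => rfl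
  have hval_r : ∀ i : Fin (r + 1), ((e (Sum.inr i)) : ℕ) = n - r - 1 + (i : ℕ) := fun i => rfl
  have hr_eq : ∀ i : Fin (r + 1), e (Sum.inr i) = GiD hrn i := fun i => Fin.ext (hval_r i)
  have hblock : g.submatrix e e = Matrix.fromBlocks
      (Matrix.of fun i j => g (e (Sum.inl i)) (e (Sum.inl j)))
      (Matrix.of fun i j => g (e (Sum.inl i)) (e (Sum.inr j))) 0
      (Matrix.of fun i' j' : Fin (r + 1) => g (GiD hrn i') (GiD hrn j')) := by
    ext i j
    rcases i with i | i <;> rcases j with j | j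
    · simp [Matrix.submatrix_apply]
    · simp [Matrix.submatrix_apply]
    · simp only [Matrix.submatrix_apply, Matrix.fromBlocks_apply₂₁, Matrix.zero_apply]
      exact hz _ _ (by rw [hval_r]; omega) (by rw [hval_l]; exact j.isLt)
    · simp only [Matrix.submatrix_apply, Matrix.fromBlocks_apply₂₂, Matrix.of_apply]
      rw [hr_eq, hr_eq]
  have hdet : g.det = _ := (Matrix.det_submatrix_equiv_self e g).symm
  rw [hblock, Matrix.det_fromBlocks_zero₂₁] at hdet
  rw [hdet] at hg
  exact (IsUnit.mul_iff.mp hg).2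

/-- Forward structural direction: the eigen-relation forces the `tDelta` shape. -/
lemma structural_forward (hn : 1 ≤ n) (hnm : n ≤ m) (hrn : r + 1 ≤ n)
    {h : Matrix (Fin m) (Fin m) k} {g : Matrix (Fin n) (Fin n) k}
    (hh : IsUnit h.det) (hg : IsUnit g.det) {c : k} (hc : c ≠ 0)
    (hC : ∀ (a : Fin m) (b : Fin n),
      (∑ s : Fin (r + 1), h (HiF (le_trans hrn hnm) s) a * g (GiF hrn s) b) =
        c * (if (b : ℕ) + (a : ℕ) + 2 = m + n - r then 1 else 0)) :
    kron h g ∈ tDelta k m n r := by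
  have hrm : r + 1 ≤ m := le_trans hrn hnm
  -- bottom-left block of h vanishes
  have hzh : ∀ i a : Fin m, m - r - 1 ≤ (i : ℕ) → (a : ℕ) < m - r - 1 → h i a = 0 := by
    intro i a hi ha
    have key : ∀ s, h (HiF hrm s) a = 0 := by
      refine key_cancel g hg (GiF hrn) (GiF_inj hrn) (fun s => h (HiF hrm s) a) (fun b => ?_)
      have hb := b.isLt
      rw [hC a b, if_neg (by omega), mul_zero]
    have hi' : i = HiF hrm ⟨(i : ℕ) - (m - r - 1), by have := i.isLt; omega⟩ :=
      Fin.ext (show (i : ℕ) = m - r - 1 + ((i : ℕ) - (m - r - 1)) by omega)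
    rw [hi']
    exact key _
  -- bottom-left block of g vanishes
  have hzg : ∀ i b : Fin n, n - r - 1 ≤ (i : ℕ) → (b : ℕ) < n - r - 1 → g i b = 0 := by
    intro i b hi hb
    have key : ∀ s, g (GiF hrn s) b = 0 := by
      refine key_cancel h hh (HiF hrm) (HiF_inj hrm) (fun s => g (GiF hrn s) b) (fun a => ?_)
      have ha := a.isLt
      calc ∑ s, g (GiF hrn s) b * h (HiF hrm s) a
          = ∑ s, h (HiF hrm s) a * g (GiF hrn s) b :=
            Finset.sum_congr rfl fun s _ => mul_comm _ _
        _ = 0 := by rw [hC a b, if_neg (by omega), mul_zero]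
    have hi' : i = GiF hrn ⟨n - 1 - (i : ℕ), by have := i.isLt; omega⟩ :=
      Fin.ext (show (i : ℕ) = n - 1 - (n - 1 - (i : ℕ)) by have := i.isLt; omega)
    rw [hi']
    exact key _
  -- the blocks
  set d : Matrix (Fin (r + 1)) (Fin (r + 1)) k :=
    Matrix.of fun i' j' => g (GiD hrn i') (GiD hrn j') with hd_def
  set h' : Matrix (Fin (r + 1)) (Fin (r + 1)) k :=
    Matrix.of fun s i' => h (HiF hrm s) (HiF hrm i') with hh'_def
  have hdu : IsUnit d.det := det_block hrn g hg hzg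
  have hdTu : IsUnit dᵀ.det := by rwa [Matrix.det_transpose]
  -- the matrix identity
  have M1 : h'ᵀ * (antidiag k (r + 1) * d) = c • antidiag k (r + 1) := by
    ext i' j'
    rw [Matrix.mul_apply]
    have step : ∀ s : Fin (r + 1),
        h'ᵀ i' s * (antidiag k (r + 1) * d) s j' =
          h (HiF hrm s) (HiF hrm i') * g (GiF hrn s) (GiD hrn j') := by
      intro s
      rw [antidiag_mul_apply, Matrix.transpose_apply]
      show h' s i' * d (revF r s) j' = _
      rw [hh'_def, hd_def]
      show h (HiF hrm s) (HiF hrm i') * g (GiD hrn (revF r s)) (GiD hrn j') = _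
      rw [← GiF_eq_GiD]
    rw [Finset.sum_congr rfl (fun s _ => step s), hC (HiF hrm i') (GiD hrn j')]
    have hi' := i'.isLt; have hj' := j'.isLt
    rw [Matrix.smul_apply, antidiag_apply, smul_eq_mul]
    congr 1
    refine if_congr ?_ rfl rfl
    show (n - r - 1 + (j' : ℕ)) + (m - r - 1 + (i' : ℕ)) + 2 = m + n - r ↔
      (i' : ℕ) + (j' : ℕ) + 1 = r + 1
    omega
  -- solve for h'
  have E1 : dᵀ * (antidiag k (r + 1) * h') = c • antidiag k (r + 1) := by
    have htr := congrArg Matrix.transpose M1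
    rw [Matrix.transpose_mul, Matrix.transpose_mul, Matrix.transpose_transpose,
      Matrix.transpose_smul, antidiag_transpose] at htr
    rw [Matrix.mul_assoc] at htr
    exact htr
  have hFormula : h' = c • (antidiag k (r + 1) * (dᵀ)⁻¹ * antidiag k (r + 1)) := by
    have h3 : antidiag k (r + 1) * ((dᵀ)⁻¹ * (dᵀ * (antidiag k (r + 1) * h'))) =
        antidiag k (r + 1) * ((dᵀ)⁻¹ * (c • antidiag k (r + 1))) := by rw [E1]
    rw [← Matrix.mul_assoc (dᵀ)⁻¹ dᵀ, Matrix.nonsing_inv_mul _ hdTu, Matrix.one_mul,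
      ← Matrix.mul_assoc, antidiag_mul_self, Matrix.one_mul] at h3
    rw [h3, Matrix.mul_smul, Matrix.mul_smul, ← Matrix.mul_assoc]
  -- assemble
  refine ⟨h, g, d, Units.mk0 c hc, rfl, hh, hg, hdu, ?_, ?_, ?_, ?_⟩
  · intro i j hi hj
    exact hzh i j (by omega) (by omega)
  · intro i j hi hj
    exact hzg i j (by omega) (by omega)
  · intro i j i' j' hi hj
    have hi2 : i = HiF hrm i' := Fin.ext (by rw [hi]; show m - (r + 1) + (i' : ℕ) = m - r - 1 + (i' : ℕ); omega)
    have hj2 : j = HiF hrm j' := Fin.ext (by rw [hj]; show m - (r + 1) + (j' : ℕ) = m - r - 1 + (j' : ℕ); omega)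
    rw [hi2, hj2]
    rw [antidiag_inv]
    show h' i' j' = _
    rw [hFormula, Matrix.smul_apply, smul_eq_mul]
    rfl
  · intro i j i' j' hi hj
    have hi2 : i = GiD hrn i' := Fin.ext (by rw [hi]; show n - (r + 1) + (i' : ℕ) = n - r - 1 + (i' : ℕ); omega)
    have hj2 : j = GiD hrn j' := Fin.ext (by rw [hj]; show n - (r + 1) + (j' : ℕ) = n - r - 1 + (j' : ℕ); omega)
    rw [hi2, hj2]
    rfl

/-- Reverse structural direction: the `tDelta` shape gives the eigen-relation. -/
lemma structural_reverse (hn : 1 ≤ n) (hnm : n ≤ m) (hrn : r + 1 ≤ n)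
    {h : Matrix (Fin m) (Fin m) k} {g : Matrix (Fin n) (Fin n) k}
    {d : Matrix (Fin (r + 1)) (Fin (r + 1)) k} {lam : kˣ}
    (hdu : IsUnit d.det)
    (hz1 : ∀ i j : Fin m, m - (r + 1) ≤ (i : ℕ) → (j : ℕ) < m - (r + 1) → h i j = 0)
    (hz2 : ∀ i j : Fin n, n - (r + 1) ≤ (i : ℕ) → (j : ℕ) < n - (r + 1) → g i j = 0)
    (hf1 : ∀ (i j : Fin m) (i' j' : Fin (r + 1)),
      (i : ℕ) = m - (r + 1) + (i' : ℕ) → (j : ℕ) = m - (r + 1) + (j' : ℕ) →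
      h i j = (lam : k) *
        ((antidiag k (r + 1))⁻¹ * (d.transpose)⁻¹ * antidiag k (r + 1)) i' j')
    (hf2 : ∀ (i j : Fin n) (i' j' : Fin (r + 1)),
      (i : ℕ) = n - (r + 1) + (i' : ℕ) → (j : ℕ) = n - (r + 1) + (j' : ℕ) →
      g i j = d i' j') :
    ∀ (a : Fin m) (b : Fin n),
      (∑ s : Fin (r + 1), h (HiF (le_trans hrn hnm) s) a * g (GiF hrn s) b) =
        (lam : k) * (if (b : ℕ) + (a : ℕ) + 2 = m + n - r then 1 else 0) := by
  have hrm : r + 1 ≤ m := le_trans hrn hnm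
  intro a b
  have ha' := a.isLt; have hb' := b.isLt
  by_cases hb : (b : ℕ) < n - r - 1
  · rw [if_neg (by omega), mul_zero]
    refine Finset.sum_eq_zero fun s _ => ?_
    have hs := s.isLt
    rw [hz2 (GiF hrn s) b (by show n - (r + 1) ≤ n - 1 - (s : ℕ); omega) (by omega), mul_zero]
  · by_cases ha : (a : ℕ) < m - r - 1
    · rw [if_neg (by omega), mul_zero]
      refine Finset.sum_eq_zero fun s _ => ?_
      have hs := s.isLt
      rw [hz1 (HiF hrm s) a (by show m - (r + 1) ≤ m - r - 1 + (s : ℕ); omega) (by omega),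
        zero_mul]
    · -- both in the bottom-right blocks
      set i' : Fin (r + 1) := ⟨(a : ℕ) - (m - r - 1), by omega⟩ with hi'_def
      set j' : Fin (r + 1) := ⟨(b : ℕ) - (n - r - 1), by omega⟩ with hj'_def
      set Q : Matrix (Fin (r + 1)) (Fin (r + 1)) k :=
        (antidiag k (r + 1))⁻¹ * (dᵀ)⁻¹ * antidiag k (r + 1) with hQ_def
      have hstep : ∀ s : Fin (r + 1),
          h (HiF hrm s) a * g (GiF hrn s) b =
            (lam : k) * (Q s i' * (antidiag k (r + 1) * d) s j') := by
        intro s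
        have hs := s.isLt
        rw [hf1 (HiF hrm s) a s i'
            (show ((HiF hrm s : Fin m) : ℕ) = m - (r + 1) + (s : ℕ) by
              show m - r - 1 + (s : ℕ) = m - (r + 1) + (s : ℕ); omega)
            (by show (a : ℕ) = m - (r + 1) + ((a : ℕ) - (m - r - 1)); omega)]
        rw [hf2 (GiF hrn s) b (revF r s) j'
            (show ((GiF hrn s : Fin n) : ℕ) = n - (r + 1) + ((revF r s : Fin (r + 1)) : ℕ) by
              show n - 1 - (s : ℕ) = n - (r + 1) + (r - (s : ℕ)); omega)
            (by show (b : ℕ) = n - (r + 1) + ((b : ℕ) - (n - r - 1)); omega)]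
        rw [antidiag_mul_apply, mul_assoc]
      rw [Finset.sum_congr rfl (fun s _ => hstep s), ← Finset.mul_sum]
      congr 1
      have hsum : ∑ s : Fin (r + 1), Q s i' * (antidiag k (r + 1) * d) s j' =
          (Qᵀ * (antidiag k (r + 1) * d)) i' j' := by
        rw [Matrix.mul_apply]
        exact Finset.sum_congr rfl fun s _ => by rw [Matrix.transpose_apply]
      rw [hsum]
      have hdTu : IsUnit dᵀ.det := by rwa [Matrix.det_transpose]
      have hQT : Qᵀ * (antidiag k (r + 1) * d) = antidiag k (r + 1) := by
        rw [hQ_def, antidiag_inv]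
        rw [Matrix.transpose_mul, Matrix.transpose_mul, antidiag_transpose,
          Matrix.transpose_nonsing_inv, Matrix.transpose_transpose]
        -- (W̃ * d⁻¹ᵀ??) careful: ((W̃ * dᵀ⁻¹) * W̃)ᵀ = W̃ᵀ * (W̃ * dᵀ⁻¹)ᵀ = W̃ * (dᵀ⁻¹ᵀ * W̃ᵀ)
        -- after rewriting: transpose of product
        calc antidiag k (r + 1) * ((d⁻¹) * antidiag k (r + 1)) * (antidiag k (r + 1) * d)
            = antidiag k (r + 1) * (d⁻¹ * ((antidiag k (r + 1) * antidiag k (r + 1)) * d)) := by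
              rw [Matrix.mul_assoc, Matrix.mul_assoc, Matrix.mul_assoc]
          _ = antidiag k (r + 1) := by
              rw [antidiag_mul_self, Matrix.one_mul, Matrix.nonsing_inv_mul _ hdu,
                Matrix.mul_one]
      rw [hQT, antidiag_apply]
      refine (if_congr ?_ rfl rfl).symm
      show (b : ℕ) + (a : ℕ) + 2 = m + n - r ↔ (i' : ℕ) + (j' : ℕ) + 1 = r + 1
      rw [hi'_def, hj'_def]
      show _ ↔ ((a : ℕ) - (m - r - 1)) + ((b : ℕ) - (n - r - 1)) + 1 = r + 1
      omega

end Struct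

end St10

namespace St10

variable {k : Type*} [Field k] {m n r : ℕ}

lemma kron_det (h : Matrix (Fin m) (Fin m) k) (g : Matrix (Fin n) (Fin n) k) :
    (kron h g).det = h.det ^ n * g.det ^ m := by
  have hre : kron h g =
      Matrix.reindex finProdFinEquiv finProdFinEquiv (Matrix.kroneckerMap (· * ·) h g) := by
    ext x y; rfl
  rw [hre, Matrix.det_reindex_self, Matrix.det_kronecker, Fintype.card_fin, Fintype.card_fin]

end St10

open St10

/-- `ε_r⁻¹·P_{mn−1,1}(k)·ε_r ∩ T_{m,n}(k) = t_Δ(P^m_{r+1}, P^n_{r+1})(k)`; that is, for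
`h ∈ GL_m(k)`, `g ∈ GL_n(k)`: `ε_r·t(h,g)·ε_r⁻¹ ∈ P_{mn−1,1}(k)` iff
`t(h,g) ∈ t_Δ(P^m_{r+1}, P^n_{r+1})(k)`. -/
theorem statement10 (k : Type*) [Field k] (m n r : ℕ) (hn : 1 ≤ n) (hnm : n ≤ m)
    (hr : r ≤ n - 1) :
    ({A | epsMat k m n r * A * (epsMat k m n r)⁻¹ ∈ ParabP k (m * n)} ∩ TSet k m n =
      tDelta k m n r) ∧
    (∀ (h : Matrix (Fin m) (Fin m) k) (g : Matrix (Fin n) (Fin n) k),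
      IsUnit h.det → IsUnit g.det →
      (epsMat k m n r * kron h g * (epsMat k m n r)⁻¹ ∈ ParabP k (m * n) ↔
        kron h g ∈ tDelta k m n r)) := by
  have hrn : r + 1 ≤ n := by omega
  have hrm : r + 1 ≤ m := le_trans hrn hnm
  have hN : 0 < m * n := Nat.mul_pos (by omega) (by omega)
  have hj1 : 0 < (m - r) * n := Nat.mul_pos (by omega) (by omega)
  have hjN : (m - r) * n ≤ m * n := Nat.mul_le_mul_right _ (by omega)
  set lastI : Fin (m * n) := ⟨m * n - 1, by omega⟩ with hlastI_def
  set E := epsMat k m n r with hE_def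
  set Einv := uMat k (m * n) ((m - r) * n) (-(bVec k n)) * (wMat k (m * n) ((m - r) * n))ᵀ
    with hEinv_def
  have hE1 : E * Einv = 1 := by
    rw [hE_def, hEinv_def]
    show (wMat k (m * n) ((m - r) * n) * uMat k (m * n) ((m - r) * n) (bVec k n)) *
      (uMat k (m * n) ((m - r) * n) (-(bVec k n)) * (wMat k (m * n) ((m - r) * n))ᵀ) = 1
    rw [Matrix.mul_assoc, ← Matrix.mul_assoc (uMat k (m * n) ((m - r) * n) (bVec k n)),
      uInv _ _ hj1, Matrix.one_mul, wMul _ _ hj1 hjN]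
  have hwTw : (wMat k (m * n) ((m - r) * n))ᵀ * wMat k (m * n) ((m - r) * n) = 1 :=
    mul_eq_one_comm.mp (wMul _ _ hj1 hjN)
  have hE2 : Einv * E = 1 := by
    rw [hE_def, hEinv_def]
    show (uMat k (m * n) ((m - r) * n) (-(bVec k n)) * (wMat k (m * n) ((m - r) * n))ᵀ) *
      (wMat k (m * n) ((m - r) * n) * uMat k (m * n) ((m - r) * n) (bVec k n)) = 1
    rw [Matrix.mul_assoc, ← Matrix.mul_assoc ((wMat k (m * n) ((m - r) * n))ᵀ), hwTw,
      Matrix.one_mul, uMul _ _ hj1, neg_add_cancel, uOne _ _ hj1]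
  have hEinv_eq : E⁻¹ = Einv := Matrix.inv_eq_right_inv hE1
  have hLrow : ∀ y, E lastI y = Lvec k m n r y := fun y =>
    eps_apply_last m n r hn hnm hrn lastI rfl y
  have hdetE : IsUnit E.det := Matrix.isUnit_det_of_right_inverse hE1
  have hdetEinv : IsUnit Einv.det := Matrix.isUnit_det_of_left_inverse hE1
  have hmulrow : ∀ X : Matrix (Fin (m * n)) (Fin (m * n)) k,
      (E * X) lastI = Lvec k m n r ᵥ* X := by
    intro X; funext t
    show (∑ u, E lastI u * X u t) = ∑ u, Lvec k m n r u * X u t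
    exact Finset.sum_congr rfl fun u _ => by rw [hLrow u]
  have hrowE : ∀ X : Matrix (Fin (m * n)) (Fin (m * n)) k,
      (E * X * Einv) lastI = (Lvec k m n r ᵥ* X) ᵥ* Einv := by
    intro X; funext jc
    show (∑ t, (E * X) lastI t * Einv t jc) = _
    simp only [hmulrow X]
    rfl
  have hLEinv : Lvec k m n r ᵥ* Einv = Pi.single lastI 1 := by
    have h1 : Pi.single lastI (1 : k) ᵥ* E = Lvec k m n r := by
      rw [Matrix.single_one_vecMul]; exact funext hLrow
    rw [← h1, Matrix.vecMul_vecMul, hE1, Matrix.vecMul_one]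
  have hmain : ∀ (h : Matrix (Fin m) (Fin m) k) (g : Matrix (Fin n) (Fin n) k),
      IsUnit h.det → IsUnit g.det →
      (E * kron h g * E⁻¹ ∈ ParabP k (m * n) ↔ kron h g ∈ tDelta k m n r) := by
    intro h g hh hg
    have hXdet : IsUnit (kron h g).det := by
      rw [kron_det]
      exact (hh.pow n).mul (hg.pow m)
    rw [hEinv_eq]
    constructor
    · rintro ⟨hdet, hzero⟩
      have hrow0 : ∀ jc : Fin (m * n), (jc : ℕ) ≠ m * n - 1 →
          ((Lvec k m n r ᵥ* kron h g) ᵥ* Einv) jc = 0 := by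
        intro jc hjc
        have h0 := hzero lastI jc rfl hjc
        rw [hrowE (kron h g)] at h0
        exact h0
      set c := ((Lvec k m n r ᵥ* kron h g) ᵥ* Einv) lastI with hc_def
      have hLX : Lvec k m n r ᵥ* kron h g = c • Lvec k m n r := by
        have hRsingle : (Lvec k m n r ᵥ* kron h g) ᵥ* Einv = Pi.single lastI c := by
          funext jc
          by_cases hjc : (jc : ℕ) = m * n - 1
          · have hj2 : jc = lastI := Fin.ext hjc
            rw [hj2, Pi.single_eq_same]
          · have hne : jc ≠ lastI := fun hh2 => hjc (by rw [hh2])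
            rw [hrow0 jc hjc, Pi.single_eq_of_ne hne]
        calc Lvec k m n r ᵥ* kron h g
            = ((Lvec k m n r ᵥ* kron h g) ᵥ* Einv) ᵥ* E := by
              rw [Matrix.vecMul_vecMul, hE2, Matrix.vecMul_one]
          _ = Pi.single lastI c ᵥ* E := by rw [hRsingle]
          _ = fun j => c * E lastI j := Matrix.single_vecMul E lastI c
          _ = c • Lvec k m n r := funext fun j => by rw [hLrow j]; rfl
      have hc0 : c ≠ 0 := by
        intro h0
        rw [h0, zero_smul] at hLX
        have hL0 : Lvec k m n r = 0 := by
          calc Lvec k m n r = Lvec k m n r ᵥ* 1 := (Matrix.vecMul_one _).symm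
            _ = Lvec k m n r ᵥ* (kron h g * (kron h g)⁻¹) := by
                rw [Matrix.mul_nonsing_inv _ hXdet]
            _ = (Lvec k m n r ᵥ* kron h g) ᵥ* (kron h g)⁻¹ :=
                (Matrix.vecMul_vecMul _ _ _).symm
            _ = (0 : Fin (m * n) → k) ᵥ* (kron h g)⁻¹ := by rw [hLX]
            _ = 0 := Matrix.zero_vecMul _
        have h1 := congrFun hL0 (embF hn hnm hrn ⟨0, by omega⟩)
        rw [Lvec_embF hn hnm hrn] at h1
        exact one_ne_zero h1
      have hC : ∀ (a : Fin m) (b : Fin n),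
          (∑ s : Fin (r + 1), h (HiF (le_trans hrn hnm) s) a * g (GiF hrn s) b) =
            c * (if (b : ℕ) + (a : ℕ) + 2 = m + n - r then 1 else 0) := by
        intro a b
        have h1 := congrFun hLX (pairF hn a b)
        rw [row_kron hn hnm hrn h g, pairF_divNat, pairF_modNat] at h1
        rw [h1, Pi.smul_apply, smul_eq_mul]
        congr 1
        unfold Lvec
        rw [pairF_val_mod, pairF_val_div]
      exact structural_forward hn hnm hrn hh hg hc0 hC
    · rintro ⟨h₀, g₀, d, lam, hXeq, hh₀, hg₀, hdu, hz1, hz2, hf1, hf2⟩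
      have hrow : ∀ y, (Lvec k m n r ᵥ* kron h g) y = (lam : k) * Lvec k m n r y := by
        intro y
        rw [hXeq, row_kron hn hnm hrn h₀ g₀]
        have h2 := structural_reverse hn hnm hrn hdu hz1 hz2 hf1 hf2 y.divNat y.modNat
        unfold Lvec
        exact h2
      refine ⟨?_, ?_⟩
      · rw [Matrix.det_mul, Matrix.det_mul]
        exact (hdetE.mul hXdet).mul hdetEinv
      · intro i jc hi hjc
        have hieq : i = lastI := Fin.ext hi
        rw [hieq, hrowE (kron h g)]
        have hXE : Lvec k m n r ᵥ* kron h g = (lam : k) • Lvec k m n r :=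
          funext fun y => by rw [hrow y]; rfl
        rw [hXE, Matrix.smul_vecMul, hLEinv]
        have hne : jc ≠ lastI := fun hh2 => hjc (by rw [hh2])
        rw [Pi.smul_apply, Pi.single_eq_of_ne hne, smul_zero]
  refine ⟨?_, hmain⟩
  ext X
  simp only [Set.mem_inter_iff, Set.mem_setOf_eq]
  constructor
  · rintro ⟨hP, h, g, hh, hg, rfl⟩
    exact (hmain h g hh hg).mp hP
  · intro hX
    have hX' := hX
    obtain ⟨h, g, d, lam, rfl, hh, hg, -, -, -, -, -⟩ := hX'
    exact ⟨(hmain h g hh hg).mpr hX, h, g, hh, hg, rfl⟩
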